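/- Define f_A(p,q) = dp + aαe^{-q} for A = aX+bY+cZ+dT with fixed α ≠ 0. Then {f_A, f_B} = f_{[A,B]} for all A, B in the real diamond Lie algebra, where {u,v} = ∂_p u ∂_q v - ∂_q u ∂_p v. -/
import Mathlib


/-- The standard Poisson bracket on ℝ²: {u,v} = ∂_p u · ∂_q v - ∂_q u · ∂_p v. -/
noncomputable def poisson (u v : ℝ × ℝ → ℝ) : ℝ × ℝ → ℝ :=
  fun w =>
    deriv (fun p => u (p, w.2)) w.1 * deriv (fun q => v (w.1, q)) w.2
      - deriv (fun q => u (w.1, q)) w.2 * deriv (fun p => v (p, w.2)) w.1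

/-- The Hamiltonian function of A = aX + bY + cZ + dT on the half-plane
orbit Ω²: f_A(p,q) = dp + aαe^{-q}. -/
noncomputable def fA2 (α a b c d : ℝ) : ℝ × ℝ → ℝ :=
  fun w => d * w.1 + a * α * Real.exp (-w.2)

lemma deriv_p (α a d q : ℝ) (p : ℝ) :
    deriv (fun p => fA2 α a 0 0 d (p, q)) p = d := by
  have h : HasDerivAt (fun p : ℝ => d * p + a * α * Real.exp (-q)) (d * 1 + 0) p :=
    ((hasDerivAt_id p).const_mul d).add (hasDerivAt_const p _)
  simpa [fA2] using h.deriv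

lemma deriv_q (α a d p : ℝ) (q : ℝ) :
    deriv (fun q => fA2 α a 0 0 d (p, q)) q = -(a * α * Real.exp (-q)) := by
  unfold fA2
  have h1 : HasDerivAt (fun q : ℝ => d * p + a * α * Real.exp (-q))
      (0 + a * α * (Real.exp (-q) * (-1))) q := by
    exact (hasDerivAt_const q (d * p)).add
      (((Real.hasDerivAt_exp (-q)).comp q ((hasDerivAt_id q).neg)).const_mul (a * α))
  simpa using h1.deriv

/-- {f_A, f_B} = f_{[A,B]} on the half-plane orbit Ω², where
[A,B] = (ad'-da')X + (db'-d'b)Y + (ab'-a'b)Z. -/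
theorem poisson_fA2 (α : ℝ) (hα : α ≠ 0) (a b c d a' b' c' d' : ℝ) :
    poisson (fA2 α a b c d) (fA2 α a' b' c' d')
      = fA2 α (a * d' - d * a') (d * b' - d' * b) (a * b' - a' * b) 0 := by
  funext w
  have e1 : fA2 α a b c d = fA2 α a 0 0 d := rfl
  have e2 : fA2 α a' b' c' d' = fA2 α a' 0 0 d' := rfl
  rw [poisson, e1, e2]
  simp only [deriv_p, deriv_q]
  show _ = fA2 _ _ _ _ _ _
  unfold fA2
  ring
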